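/- Let ρ be a positive definite operator on a finite-dimensional Hilbert space 𝒦, and P an orthogonal projection with P ≠ 0 and P ≠ I. Then for i ∈ {0,1}, tr(ρ⊗ρ · R_{ii}) > 0, where R_{ii} = (1/2)[I-(-1)^i T][P⊗(I-P)][I-(-1)^i T] and T is the swap on 𝒦⊗𝒦. -/

import Mathlib

open Matrix Kronecker ComplexOrder

/-- The swap (exchange) operator on `𝒦 ⊗ 𝒦`. -/
def swapMatrix (m : Type*) [Fintype m] [DecidableEq m] : Matrix (m × m) (m × m) ℂ :=
  Matrix.of fun p q => if p.1 = q.2 ∧ p.2 = q.1 then 1 else 0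

/-- `R_{ij} := (1/2)[I - (-1)^i T][P⊗(I-P)][I - (-1)^j T]`. -/
noncomputable def Rop {m : Type*} [Fintype m] [DecidableEq m]
    (P : Matrix m m ℂ) (i j : Fin 2) : Matrix (m × m) (m × m) ℂ :=
  (2 : ℂ)⁻¹ • ((1 - ((-1 : ℂ)) ^ (i : ℕ) • swapMatrix m) * (P ⊗ₖ (1 - P)) *
    (1 - ((-1 : ℂ)) ^ (j : ℕ) • swapMatrix m))

section Aux

set_option linter.unusedSectionVars false

variable {m : Type*} [Fintype m] [DecidableEq m]

lemma swap_conjT : (swapMatrix m)ᴴ = swapMatrix m := by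
  ext p q
  simp only [Matrix.conjTranspose_apply, swapMatrix, Matrix.of_apply]
  split_ifs with h1 h2 <;> simp_all [eq_comm]

lemma swap_mulVec (x : m × m → ℂ) :
    (swapMatrix m) *ᵥ x = fun p => x (p.2, p.1) := by
  ext ⟨c, d⟩
  simp only [swapMatrix, Matrix.mulVec, Matrix.of_apply, dotProduct]
  rw [Fintype.sum_prod_type]
  rw [Finset.sum_comm]
  simp [ite_and, Finset.sum_ite_eq, Finset.sum_ite_eq']

lemma kron_mulVec (M N : Matrix m m ℂ) (x y : m → ℂ) :
    (M ⊗ₖ N) *ᵥ (fun p => x p.1 * y p.2) = fun p => (M *ᵥ x) p.1 * (N *ᵥ y) p.2 := by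
  ext ⟨c, d⟩
  simp only [Matrix.mulVec, dotProduct, Matrix.kroneckerMap_apply, kroneckerMap_apply]
  rw [Fintype.sum_prod_type, Finset.sum_mul_sum]
  congr 1; ext a; congr 1; ext b; ring

lemma kron_conjT (A B : Matrix m m ℂ) : (A ⊗ₖ B)ᴴ = Aᴴ ⊗ₖ Bᴴ := by
  ext p q
  simp [Matrix.conjTranspose_apply, Matrix.kroneckerMap_apply]

lemma diag_entry (B σ : Matrix (m × m) (m × m) ℂ) (k : m × m) :
    (B * σ * Bᴴ) k k = star (star (B k)) ⬝ᵥ σ *ᵥ star (B k) := by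
  simp only [Matrix.mul_apply, Matrix.conjTranspose_apply, dotProduct, Matrix.mulVec,
    Pi.star_apply, star_star, Finset.sum_mul, Finset.mul_sum]
  rw [Finset.sum_comm]
  congr 1; ext a; congr 1; ext b; ring

lemma kron_posDef {ρ : Matrix m m ℂ} (hρ : ρ.PosDef) : (ρ ⊗ₖ ρ).PosDef := by
  exact hρ.kronecker hρ

lemma Bv_eq (P Q : Matrix m m ℂ) (s : ℂ) (a b : m → ℂ)
    (haP : P *ᵥ a = a) (hbQ : Q *ᵥ b = b) (hbP : P *ᵥ b = 0) :
    ((P ⊗ₖ Q) * (1 - s • swapMatrix m)) *ᵥ (fun p => a p.1 * b p.2)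
      = fun p => a p.1 * b p.2 := by
  rw [← Matrix.mulVec_mulVec, Matrix.sub_mulVec, Matrix.one_mulVec, Matrix.smul_mulVec,
    _root_.swap_mulVec, Matrix.mulVec_sub, Matrix.mulVec_smul, kron_mulVec, haP, hbQ]
  have h2 : (fun p : m × m => (fun q : m × m => a q.1 * b q.2) (p.2, p.1))
      = fun p : m × m => b p.1 * a p.2 := by
    ext p; simp [mul_comm]
  rw [h2, kron_mulVec, hbP]
  ext p; simp

end Aux

/-- for positive definite `ρ` and a nontrivial projection `P`,
`tr(ρ⊗ρ · R_{ii}) > 0` for `i ∈ {0,1}`. -/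
theorem trace_Rop_pos {m : Type*} [Fintype m] [DecidableEq m]
    (ρ : Matrix m m ℂ) (hρ : ρ.PosDef)
    (P : Matrix m m ℂ) (hPadj : Pᴴ = P) (hPproj : P * P = P)
    (hP0 : P ≠ 0) (hP1 : P ≠ 1) :
    ∀ i : Fin 2, 0 < (((ρ ⊗ₖ ρ) * Rop P i i).trace).re := by
  intro i
  set s : ℂ := ((-1 : ℂ)) ^ (i : ℕ) with hs_def
  have hs : star s = s := by simp [hs_def]
  set Q : Matrix m m ℂ := 1 - P with hQdef
  have hQadj : Qᴴ = Q := by simp [hQdef, hPadj]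
  have hQproj : Q * Q = Q := by
    rw [hQdef]
    rw [Matrix.mul_sub, Matrix.sub_mul, Matrix.sub_mul, hPproj]
    simp
  set T : Matrix (m × m) (m × m) ℂ := swapMatrix m with hTdef
  set A : Matrix (m × m) (m × m) ℂ := 1 - s • T with hAdef
  have hAadj : Aᴴ = A := by
    rw [hAdef]
    rw [Matrix.conjTranspose_sub, Matrix.conjTranspose_smul, Matrix.conjTranspose_one,
      hTdef, swap_conjT, hs]
  set B : Matrix (m × m) (m × m) ℂ := (P ⊗ₖ Q) * A with hBdef
  have hPQadj : (P ⊗ₖ Q)ᴴ = P ⊗ₖ Q := by rw [kron_conjT, hPadj, hQadj]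
  have hBHB : Bᴴ * B = A * (P ⊗ₖ Q) * A := by
    rw [hBdef, Matrix.conjTranspose_mul, hAadj, hPQadj]
    rw [Matrix.mul_assoc, ← Matrix.mul_assoc (P ⊗ₖ Q), ← Matrix.mul_kronecker_mul,
      hPproj, hQproj, ← Matrix.mul_assoc]
  have hσ : (ρ ⊗ₖ ρ).PosDef := kron_posDef hρ
  set σ : Matrix (m × m) (m × m) ℂ := ρ ⊗ₖ ρ with hσdef
  -- rewrite the trace
  have htr : ((σ * Rop P i i).trace) = (2 : ℂ)⁻¹ * (B * σ * Bᴴ).trace := by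
    have hR : Rop P i i = (2 : ℂ)⁻¹ • (Bᴴ * B) := by
      rw [Rop, hBHB, ← hs_def, ← hQdef, ← hTdef, ← hAdef]
    rw [hR, Matrix.mul_smul, Matrix.trace_smul, smul_eq_mul]
    congr 1
    rw [← Matrix.mul_assoc, Matrix.trace_mul_cycle]
  rw [htr]
  have h2 : ((2 : ℂ)⁻¹ * (B * σ * Bᴴ).trace).re
      = 2⁻¹ * ((B * σ * Bᴴ).trace).re := by
    have : (2 : ℂ)⁻¹ = ((2⁻¹ : ℝ) : ℂ) := by norm_num
    rw [this, Complex.re_ofReal_mul]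
  rw [h2]
  have hpos : 0 < ((B * σ * Bᴴ).trace).re := by
    -- find a nonzero row of B
    obtain ⟨u, hu⟩ : ∃ u, P *ᵥ u ≠ 0 := by
      by_contra h
      push_neg at h
      apply hP0
      ext c d
      have := congrFun (h (Pi.single d 1)) c
      simpa [Matrix.mulVec_single] using this
    obtain ⟨w, hw⟩ : ∃ w, Q *ᵥ w ≠ 0 := by
      by_contra h
      push_neg at h
      apply hP1
      have : Q = 0 := by
        ext c d
        have := congrFun (h (Pi.single d 1)) c
        simpa [Matrix.mulVec_single] using this
      rw [hQdef] at this
      have := sub_eq_zero.mp this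
      exact this.symm
    set a : m → ℂ := P *ᵥ u with hadef
    set b : m → ℂ := Q *ᵥ w with hbdef
    have haP : P *ᵥ a = a := by rw [hadef, Matrix.mulVec_mulVec, hPproj]
    have hbQ : Q *ᵥ b = b := by rw [hbdef, Matrix.mulVec_mulVec, hQproj]
    have hbP : P *ᵥ b = 0 := by
      rw [hbdef, Matrix.mulVec_mulVec]
      have hPQ : P * Q = 0 := by
        rw [hQdef, Matrix.mul_sub, hPproj]
        simp
      rw [hPQ, Matrix.zero_mulVec]
    obtain ⟨k, hk⟩ : ∃ k, a k ≠ 0 := Function.ne_iff.mp hu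
    obtain ⟨l, hl⟩ : ∃ l, b l ≠ 0 := Function.ne_iff.mp hw
    have hBv : B *ᵥ (fun p => a p.1 * b p.2) = fun p => a p.1 * b p.2 := by
      rw [hBdef, hAdef, hTdef]
      exact Bv_eq P Q s a b haP hbQ hbP
    have hrow : star (B (k, l)) ≠ 0 := by
      intro h0
      have hB0 : B (k, l) = 0 := by
        have := congrArg star h0
        simpa using this
      have : (B *ᵥ (fun p => a p.1 * b p.2)) (k, l) = 0 := by
        simp [Matrix.mulVec, hB0]
      rw [hBv] at this
      exact (mul_ne_zero hk hl) this
    -- trace as a sum of quadratic forms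
    rw [Matrix.trace]
    rw [Complex.re_sum]
    refine Finset.sum_pos' (fun p _ => ?_) ⟨(k, l), Finset.mem_univ _, ?_⟩
    · rw [Matrix.diag_apply, diag_entry]
      exact hσ.posSemidef.re_dotProduct_nonneg _
    · rw [Matrix.diag_apply, diag_entry]
      exact hσ.re_dotProduct_pos hrow
  positivity
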